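/- Let n ≥ 2 and let λ_1,…,λ_n be reals with each λ_i ∉ ℤ_{≥0} and λ := λ_1+⋯+λ_n ∉ ℤ_{≥0}. With d defined as below for the generic tuple (λ_1,…,λ_n): lim_{m → ∞} |d(m)| / C(m+n−2, n−2) = 1. That is, the ratio of the absolute signature of the level-m multiplicity space to its dimension tends to 1 as m → ∞. -/

import Mathlib

open scoped Classical
open Filter

/-- `fsig λ k` is the coefficient of `e^{λ-2k}` in the signature character of the
Verma module `M_λ` evaluated at `s = -1`. -/
noncomputable def fsig (lam : ℝ) (k : ℤ) : ℤ :=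
  if k < 0 then 0
  else if lam < 0 then (-1) ^ k.toNat
  else if k ≤ ⌊lam⌋ then 1
  else (-1) ^ (k + ⌈lam⌉).toNat

/-- `convSig n lam k = Σ_{k₁+⋯+k_n = k} ∏_i f_{λ_i}(k_i)`, the coefficient of
`e^{λ−2k}` in the product of signature characters at `s = −1`. -/
noncomputable def convSig (n : ℕ) (lam : Fin n → ℝ) (k : ℕ) : ℤ :=
  ∑ x ∈ Finset.Nat.antidiagonalTuple n k, ∏ i, fsig (lam i) (x i)

section SigAux
open PowerSeries

/-- start of the alternating tail of `fsig` -/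
noncomputable def nof (mu : ℝ) : ℕ := (max ⌈mu⌉ 0).toNat

lemma neg_one_pow_sub {m k : ℕ} (h : m ≤ k) : ((-1 : ℤ)) ^ (k - m) = (-1) ^ (k + m) := by
  have h2 : (-1 : ℤ) ^ (k - m) * (-1) ^ m * (-1) ^ m = (-1) ^ (k + m) := by
    rw [← pow_add, Nat.sub_add_cancel h, ← pow_add]
  have h3 : ((-1 : ℤ) ^ m) * (-1) ^ m = 1 := by
    rw [← pow_add]; exact Even.neg_one_pow ⟨m, rfl⟩
  calc ((-1 : ℤ)) ^ (k - m) = (-1 : ℤ) ^ (k - m) * ((-1) ^ m * (-1) ^ m) := by rw [h3, mul_one]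
  _ = (-1) ^ (k + m) := by rw [← mul_assoc]; exact h2

lemma fsig_neg {mu : ℝ} {j : ℤ} (hj : j < 0) : fsig mu j = 0 := by
  simp [fsig, hj]

lemma fsig_tail {mu : ℝ} (hmu : ∀ z : ℕ, mu ≠ z) {j : ℕ} (hj : nof mu ≤ j) :
    fsig mu (j : ℤ) = (-1) ^ (j + nof mu) := by
  have hj0 : ¬ ((j : ℤ) < 0) := by exact_mod_cast not_lt.mpr (Int.natCast_nonneg j)
  rcases lt_or_gt_of_ne (fun h0 : mu = 0 => hmu 0 (by simpa using h0)) with hneg | hpos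
  · have hceil : ⌈mu⌉ ≤ 0 := by exact_mod_cast Int.ceil_le.mpr (by simpa using hneg.le)
    have hn : nof mu = 0 := by simp [nof, max_eq_right hceil]
    rw [fsig, if_neg hj0, if_pos hneg, hn]
    simp
  · have hceil : (0 : ℤ) < ⌈mu⌉ := Int.ceil_pos.mpr hpos
    have hn : (nof mu : ℤ) = ⌈mu⌉ := by
      rw [nof, max_eq_left hceil.le, Int.toNat_of_nonneg hceil.le]
    have hcj : ⌈mu⌉ ≤ (j : ℤ) := by rw [← hn]; exact_mod_cast hj
    have hfloor : ¬ ((j : ℤ) ≤ ⌊mu⌋) := by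
      intro hle
      have h1 : (j : ℝ) ≤ mu := Int.le_floor.mp hle
      have h2 : mu ≤ (j : ℝ) := by exact_mod_cast Int.ceil_le.mp hcj
      exact hmu j (le_antisymm h2 (by exact_mod_cast h1))
    rw [fsig, if_neg hj0, if_neg (not_lt.mpr hpos.le), if_neg hfloor]
    congr 1
    have : ((j : ℤ) + ⌈mu⌉) = ((j + nof mu : ℕ) : ℤ) := by push_cast [← hn]; ring
    rw [this, Int.toNat_natCast]

lemma ceil_shift (mu : ℝ) (m : ℕ) : ⌈mu - 2*(m:ℝ)⌉ = ⌈mu⌉ - 2*m := by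
  rw [show (2*(m:ℝ)) = ((2*m : ℕ):ℝ) by push_cast; ring, Int.ceil_sub_natCast]
  push_cast; ring

lemma nof_shift_le {mu : ℝ} {m k : ℕ} (hm : m ≤ k) (hk : nof mu ≤ k) :
    nof (mu - 2*(m:ℝ)) ≤ k - m := by
  have h1 : nof (mu - 2*(m:ℝ)) = (max (⌈mu⌉ - 2*m) 0).toNat := by
    rw [nof, ceil_shift]
  have h2 : ⌈mu⌉ ≤ (nof mu : ℤ) := by
    rw [nof, Int.toNat_of_nonneg (le_max_right _ _)]; exact le_max_left _ _
  have h3 : (nof mu : ℤ) ≤ (k : ℤ) := by exact_mod_cast hk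
  omega

lemma dEq (n : ℕ) (lam : Fin n → ℝ)
    (hsumZ : ∀ z : ℕ, (∑ i, lam i) ≠ z)
    (d : ℕ → ℤ)
    (hd : ∀ k : ℕ, d k = convSig n lam k -
      ∑ m ∈ Finset.range k, d m * fsig ((∑ i, lam i) - 2 * m) ((k : ℤ) - m))
    {k : ℕ} (hk : nof (∑ i, lam i) + 1 ≤ k) :
    d k = convSig n lam k + convSig n lam (k - 1) := by
  set mu : ℝ := ∑ i, lam i with hmu
  set NL : ℕ := nof mu with hNL
  have hgen2 : ∀ m z : ℕ, mu - 2*(m:ℝ) ≠ z := by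
    intro m z h
    exact hsumZ (z + 2*m) (by push_cast at h ⊢; linarith)
  set E : ℕ → ℕ := fun m => nof (mu - 2*(m:ℝ)) with hE
  set c : ℕ → ℤ := fun m => d m * ((-1)^m * (-1)^(E m)) with hc
  have hEk : ∀ j : ℕ, NL ≤ j → E j = 0 := by
    intro j hj
    have h := nof_shift_le (le_refl j) hj
    rw [Nat.sub_self] at h
    exact Nat.le_zero.mp h
  have key : ∀ m j : ℕ, m ≤ j → NL ≤ j →
      d m * fsig (mu - 2 * m) ((j : ℤ) - m) = (-1)^j * c m := by
    intro m j hmj hj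
    have hcast : ((j : ℤ) - m) = ((j - m : ℕ) : ℤ) := by
      have := hmj; push_cast [Nat.cast_sub hmj]; ring
    rw [hcast, fsig_tail (hgen2 m) (nof_shift_le hmj hj)]
    rw [pow_add, neg_one_pow_sub hmj, hc]
    simp only []
    rw [pow_add]
    ring
  have Hconv : ∀ j : ℕ, NL ≤ j → convSig n lam j = (-1)^j * ∑ m ∈ Finset.range (j+1), c m := by
    intro j hj
    have h1 : convSig n lam j = ∑ m ∈ Finset.range j, d m * fsig (mu - 2 * m) ((j : ℤ) - m) + d j := by
      linarith [hd j]
    rw [h1, Finset.mul_sum, Finset.sum_range_succ]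
    congr 1
    · exact Finset.sum_congr rfl fun m hm =>
        key m j (Nat.le_of_lt_succ (Nat.lt_succ_of_lt (Finset.mem_range.mp hm))) hj
    · rw [hc]
      simp only [hEk j hj, pow_zero, mul_one]
      have hsq : ((-1:ℤ)^j)*((-1:ℤ)^j) = 1 := by
        rw [← pow_add]; exact Even.neg_one_pow ⟨j, rfl⟩
      linear_combination (-(d j)) * hsq
  have hk1 : 1 ≤ k := le_trans (Nat.le_add_left 1 NL) hk
  have hkNL : NL ≤ k := by omega
  have hkNL' : NL ≤ k - 1 := by omega
  rw [Hconv k hkNL, Hconv (k-1) hkNL', show k - 1 + 1 = k by omega]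
  have hsign : ((-1 : ℤ))^(k-1) = -(-1)^k := by
    rw [neg_one_pow_sub hk1, pow_add]; ring
  rw [hsign, Finset.sum_range_succ c k]
  have hsq : ((-1:ℤ)^k)*((-1:ℤ)^k) = 1 := by
    rw [← pow_add]; exact Even.neg_one_pow ⟨k, rfl⟩
  have hck : ((-1:ℤ))^k * c k = d k := by
    rw [hc]
    simp only [hEk k hkNL, pow_zero, mul_one]
    linear_combination (d k) * hsq
  have hring : (-1:ℤ)^k * (∑ m ∈ Finset.range k, c m + c k) +
      (-(-1:ℤ)^k) * (∑ m ∈ Finset.range k, c m) = (-1)^k * c k := by ring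
  rw [hring]
  exact hck.symm

noncomputable def altPS : PowerSeries ℤ := PowerSeries.mk fun k => (-1)^k
noncomputable def Fps (mu : ℝ) : PowerSeries ℤ := PowerSeries.mk fun k => fsig mu k
noncomputable def Gps (mu : ℝ) : PowerSeries ℤ := (1 + PowerSeries.X) * Fps mu

lemma coeff_altPS (k : ℕ) : PowerSeries.coeff (R := ℤ) k altPS = (-1)^k := coeff_mk _ _

lemma coeff_Fps (mu : ℝ) (k : ℕ) : PowerSeries.coeff (R := ℤ) k (Fps mu) = fsig mu k := coeff_mk _ _

lemma one_add_X_mul_coeff (f : PowerSeries ℤ) (k : ℕ) :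
    PowerSeries.coeff (R := ℤ) k ((1 + PowerSeries.X) * f) =
      PowerSeries.coeff (R := ℤ) k f + (if k = 0 then 0 else PowerSeries.coeff (R := ℤ) (k-1) f) := by
  have h : (1 + PowerSeries.X) * f = f + PowerSeries.X * f := by ring
  rw [h, map_add]
  cases k with
  | zero => simp
  | succ k => rw [PowerSeries.coeff_succ_X_mul]; simp

lemma coeff_Gps (mu : ℝ) (k : ℕ) :
    PowerSeries.coeff (R := ℤ) k (Gps mu) = fsig mu k + fsig mu ((k : ℤ) - 1) := by
  rw [Gps, one_add_X_mul_coeff, coeff_Fps]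
  cases k with
  | zero => simp [fsig_neg (show (-1:ℤ) < 0 by norm_num)]
  | succ k =>
    rw [if_neg (Nat.succ_ne_zero k), coeff_Fps]
    norm_num

lemma coeff_Gps_vanish {mu : ℝ} (hmu : ∀ z : ℕ, mu ≠ z) {j : ℕ} (hj : nof mu < j) :
    PowerSeries.coeff (R := ℤ) j (Gps mu) = 0 := by
  have hj1 : 1 ≤ j := Nat.one_le_iff_ne_zero.mpr (by omega)
  have hcast : ((j : ℤ) - 1) = ((j - 1 : ℕ) : ℤ) := by push_cast [Nat.cast_sub hj1]; ring
  rw [coeff_Gps, hcast, fsig_tail hmu (by omega : nof mu ≤ j),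
    fsig_tail hmu (by omega : nof mu ≤ j - 1)]
  have : j + nof mu = (j - 1 + nof mu) + 1 := by omega
  rw [this, pow_succ]
  ring

lemma alt_mul_one_add : altPS * (1 + PowerSeries.X) = 1 := by
  have h : altPS * (1 + PowerSeries.X) = (1 + PowerSeries.X) * altPS := by ring
  rw [h]
  ext k
  rw [one_add_X_mul_coeff]
  cases k with
  | zero => simp [coeff_altPS]
  | succ k =>
    rw [if_neg (Nat.succ_ne_zero k), coeff_altPS, coeff_altPS]
    simp [PowerSeries.coeff_one, pow_succ]

lemma alt_mul_Gps (mu : ℝ) : altPS * Gps mu = Fps mu := by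
  rw [Gps, ← mul_assoc, alt_mul_one_add, one_mul]

lemma coeff_alt_pow (s : ℕ) : ∀ k : ℕ,
    PowerSeries.coeff (R := ℤ) k (altPS^(s+1)) = (-1)^k * ((k+s).choose s) := by
  induction s with
  | zero => intro k; simpa using coeff_altPS k
  | succ s ih =>
    intro k
    rw [pow_succ, PowerSeries.coeff_mul, Finset.Nat.sum_antidiagonal_eq_sum_range_succ_mk]
    have hterm : ∀ i ∈ Finset.range (k+1),
        PowerSeries.coeff (R := ℤ) i (altPS^(s+1)) * PowerSeries.coeff (R := ℤ) (k - i) altPS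
          = (-1)^k * ((i+s).choose s : ℤ) := by
      intro i hi
      have hik : i ≤ k := Nat.lt_succ_iff.mp (Finset.mem_range.mp hi)
      rw [ih i, coeff_altPS, neg_one_pow_sub hik]
      have hsq : ((-1:ℤ)^i)*((-1:ℤ)^i) = 1 := by
        rw [← pow_add]; exact Even.neg_one_pow ⟨i, rfl⟩
      rw [show k + i = i + k by ring, pow_add]
      linear_combination ((i+s).choose s : ℤ) * (-1:ℤ)^k * hsq
    rw [Finset.sum_congr rfl hterm, ← Finset.mul_sum]
    congr 1
    rw [← Nat.cast_sum]
    norm_cast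
    exact Nat.sum_range_add_choose k s

lemma conv_coeff (n : ℕ) (lam : Fin n → ℝ) (k : ℕ) :
    convSig n lam k = PowerSeries.coeff (R := ℤ) k (∏ i, Fps (lam i)) := by
  rw [PowerSeries.coeff_prod, convSig]
  refine Finset.sum_nbij' (fun x => Finsupp.equivFunOnFinite.symm x)
    (fun l => (l : Fin n → ℕ)) ?_ ?_ ?_ ?_ ?_
  · intro x hx
    rw [Finset.mem_finsuppAntidiag]
    refine ⟨?_, Finset.subset_univ _⟩
    have := Finset.Nat.mem_antidiagonalTuple.mp hx
    simpa using this
  · intro l hl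
    rw [Finset.Nat.mem_antidiagonalTuple]
    have := (Finset.mem_finsuppAntidiag.mp hl).1
    simpa using this
  · intro x _; rfl
  · intro l _; simp
  · intro x _
    refine Finset.prod_congr rfl fun i _ => ?_
    rw [coeff_Fps]
    simp

lemma prodG (n : ℕ) (hn : 1 ≤ n) (lam : Fin n → ℝ) :
    (∏ i, Gps (lam i)) * altPS^(n-1) = (1 + PowerSeries.X) * ∏ i, Fps (lam i) := by
  have h1 : (∏ i, Gps (lam i)) = (1 + PowerSeries.X)^n * ∏ i, Fps (lam i) := by
    simp [Gps, Finset.prod_mul_distrib, Finset.card_univ]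
  have h2 : ((1 + PowerSeries.X : PowerSeries ℤ))^n = (1 + PowerSeries.X)^(n-1) * (1 + PowerSeries.X) := by
    rw [← pow_succ]; congr 1; omega
  have h3 : ((1 + PowerSeries.X : PowerSeries ℤ))^(n-1) * altPS^(n-1) = 1 := by
    rw [← mul_pow, mul_comm, alt_mul_one_add, one_pow]
  calc (∏ i, Gps (lam i)) * altPS^(n-1)
      = ((1 + PowerSeries.X)^(n-1) * altPS^(n-1)) * ((1 + PowerSeries.X) * ∏ i, Fps (lam i)) := by
        rw [h1, h2]; ring
    _ = (1 + PowerSeries.X) * ∏ i, Fps (lam i) := by rw [h3, one_mul]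

lemma Hvanish (n : ℕ) (lam : Fin n → ℝ) (hgen : ∀ (i : Fin n) (z : ℕ), lam i ≠ z) :
    ∀ s : Finset (Fin n), ∀ k : ℕ, (∑ i ∈ s, nof (lam i)) < k →
      PowerSeries.coeff (R := ℤ) k (∏ i ∈ s, Gps (lam i)) = 0 := by
  intro s
  induction s using Finset.induction_on with
  | empty =>
    intro k hk
    rw [Finset.prod_empty, PowerSeries.coeff_one, if_neg]
    simp at hk; omega
  | @insert a s ha ih =>
    intro k hk
    rw [Finset.prod_insert ha, PowerSeries.coeff_mul]
    apply Finset.sum_eq_zero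
    intro p hp
    have hpk := Finset.HasAntidiagonal.mem_antidiagonal.mp hp
    rcases le_or_gt p.1 (nof (lam a)) with h1 | h1
    · have h2 : ∑ i ∈ s, nof (lam i) < p.2 := by
        rw [Finset.sum_insert ha] at hk; omega
      rw [ih p.2 h2, mul_zero]
    · rw [coeff_Gps_vanish (hgen a) h1, zero_mul]

lemma altH (n : ℕ) (lam : Fin n → ℝ) (hgen : ∀ (i : Fin n) (z : ℕ), lam i ≠ z) :
    ∀ s : Finset (Fin n), ∀ k : ℕ, (∑ i ∈ s, nof (lam i)) ≤ k →
      PowerSeries.coeff (R := ℤ) k (altPS * ∏ i ∈ s, Gps (lam i)) =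
        (-1)^(k + ∑ i ∈ s, nof (lam i)) := by
  intro s
  induction s using Finset.induction_on with
  | empty => intro k _; simp [coeff_altPS]
  | @insert a s ha ih =>
    intro k hk
    rw [Finset.sum_insert ha] at hk ⊢
    have hassoc : altPS * ∏ i ∈ insert a s, Gps (lam i) =
        (altPS * ∏ i ∈ s, Gps (lam i)) * Gps (lam a) := by
      rw [Finset.prod_insert ha]; ring
    rw [hassoc, PowerSeries.coeff_mul]
    have hterm : ∀ p ∈ Finset.HasAntidiagonal.antidiagonal k,
        PowerSeries.coeff (R := ℤ) p.1 (altPS * ∏ i ∈ s, Gps (lam i)) *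
          PowerSeries.coeff (R := ℤ) p.2 (Gps (lam a))
        = (-1)^(∑ i ∈ s, nof (lam i)) *
            ((-1)^p.1 * PowerSeries.coeff (R := ℤ) p.2 (Gps (lam a))) := by
      intro p hp
      have hpk := Finset.HasAntidiagonal.mem_antidiagonal.mp hp
      rcases le_or_gt p.2 (nof (lam a)) with h2 | h2
      · have h1 : ∑ i ∈ s, nof (lam i) ≤ p.1 := by omega
        rw [ih p.1 h1, pow_add]
        ring
      · rw [coeff_Gps_vanish (hgen a) h2]; ring
    rw [Finset.sum_congr rfl hterm, ← Finset.mul_sum]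
    have hsum : ∑ p ∈ Finset.HasAntidiagonal.antidiagonal k,
        (-1:ℤ)^p.1 * PowerSeries.coeff (R := ℤ) p.2 (Gps (lam a)) = fsig (lam a) k := by
      have h := PowerSeries.coeff_mul k altPS (Gps (lam a))
      rw [alt_mul_Gps, coeff_Fps] at h
      calc ∑ p ∈ Finset.HasAntidiagonal.antidiagonal k, (-1:ℤ)^p.1 * PowerSeries.coeff (R := ℤ) p.2 (Gps (lam a))
          = ∑ p ∈ Finset.HasAntidiagonal.antidiagonal k,
              PowerSeries.coeff (R := ℤ) p.1 altPS * PowerSeries.coeff (R := ℤ) p.2 (Gps (lam a)) :=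
            Finset.sum_congr rfl fun p _ => by rw [coeff_altPS]
        _ = fsig (lam a) k := h.symm
    rw [hsum, fsig_tail (hgen a) (by omega : nof (lam a) ≤ k)]
    rw [pow_add, pow_add, pow_add]
    ring

lemma dFormula (n : ℕ) (hn : 2 ≤ n) (lam : Fin n → ℝ)
    (hgen : ∀ (i : Fin n) (z : ℕ), lam i ≠ z)
    (d : ℕ → ℤ)
    (hdEq : ∀ k : ℕ, nof (∑ i, lam i) + 1 ≤ k →
      d k = convSig n lam k + convSig n lam (k - 1))
    {k : ℕ} (hk1 : nof (∑ i, lam i) + 1 ≤ k) (hk2 : (∑ i, nof (lam i)) ≤ k) :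
    d k = ∑ a ∈ Finset.range ((∑ i, nof (lam i)) + 1),
      (PowerSeries.coeff (R := ℤ) a (∏ i, Gps (lam i))) * ((-1)^(k-a) * ((k - a + (n-2)).choose (n-2))) := by
  have hk0 : 1 ≤ k := by omega
  have step1 : d k = PowerSeries.coeff (R := ℤ) k ((1 + PowerSeries.X) * ∏ i, Fps (lam i)) := by
    rw [hdEq k hk1, one_add_X_mul_coeff, if_neg (by omega : ¬ k = 0),
      conv_coeff, conv_coeff]
  rw [step1, ← prodG n (by omega) lam, PowerSeries.coeff_mul,
    Finset.Nat.sum_antidiagonal_eq_sum_range_succ_mk]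
  have hn2 : n - 1 = (n-2)+1 := by omega
  have hterm : ∀ a ∈ Finset.range (k+1),
      PowerSeries.coeff (R := ℤ) a (∏ i, Gps (lam i)) * PowerSeries.coeff (R := ℤ) (k-a) (altPS^(n-1))
      = (PowerSeries.coeff (R := ℤ) a (∏ i, Gps (lam i))) * ((-1)^(k-a) * ((k - a + (n-2)).choose (n-2))) := by
    intro a _
    rw [hn2, coeff_alt_pow]
  rw [Finset.sum_congr rfl hterm]
  symm
  apply Finset.sum_subset
  · apply Finset.range_subset_range.mpr; omega
  · intro a _ ha
    rw [Hvanish n lam hgen Finset.univ a (by simp at ha ⊢; omega), zero_mul]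

lemma Hmass (n : ℕ) (lam : Fin n → ℝ) (hgen : ∀ (i : Fin n) (z : ℕ), lam i ≠ z) :
    ∑ a ∈ Finset.range ((∑ i, nof (lam i)) + 1),
      (-1:ℤ)^a * PowerSeries.coeff (R := ℤ) a (∏ i, Gps (lam i)) = (-1)^(∑ i, nof (lam i)) := by
  set W := ∑ i, nof (lam i) with hW
  have h := altH n lam hgen Finset.univ W le_rfl
  rw [PowerSeries.coeff_mul] at h
  have hswap : ∑ p ∈ Finset.HasAntidiagonal.antidiagonal W,
      PowerSeries.coeff (R := ℤ) p.1 altPS * PowerSeries.coeff (R := ℤ) p.2 (∏ i, Gps (lam i))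
      = ∑ a ∈ Finset.range (W+1), (-1:ℤ)^(W-a) * PowerSeries.coeff (R := ℤ) a (∏ i, Gps (lam i)) := by
    rw [← Finset.Nat.sum_antidiagonal_swap]
    rw [Finset.Nat.sum_antidiagonal_eq_sum_range_succ_mk]
    exact Finset.sum_congr rfl fun a _ => by simp [coeff_altPS]
  rw [hswap] at h
  have h2 : ∀ a ∈ Finset.range (W+1),
      (-1:ℤ)^(W-a) * PowerSeries.coeff (R := ℤ) a (∏ i, Gps (lam i))
      = (-1)^W * ((-1)^a * PowerSeries.coeff (R := ℤ) a (∏ i, Gps (lam i))) := by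
    intro a ha
    have haW : a ≤ W := by simp at ha; omega
    rw [neg_one_pow_sub haW, pow_add]; ring
  rw [Finset.sum_congr rfl h2, ← Finset.mul_sum] at h
  have hWW : ((-1:ℤ))^(W + W) = 1 := Even.neg_one_pow ⟨W, rfl⟩
  rw [hWW] at h
  have hsq : ((-1:ℤ)^W)*((-1:ℤ)^W) = 1 := by
    rw [← pow_add]; exact Even.neg_one_pow ⟨W, rfl⟩
  calc ∑ a ∈ Finset.range (W+1), (-1:ℤ)^a * PowerSeries.coeff (R := ℤ) a (∏ i, Gps (lam i))
      = ((-1:ℤ)^W * (-1:ℤ)^W) * ∑ a ∈ Finset.range (W+1), (-1:ℤ)^a * PowerSeries.coeff (R := ℤ) a (∏ i, Gps (lam i)) := by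
        rw [hsq, one_mul]
    _ = (-1:ℤ)^W := by rw [mul_assoc, h, mul_one]

lemma factor_tendsto (a c : ℕ) (hc : 1 ≤ c) :
    Tendsto (fun k : ℕ => ((k - a + c : ℕ) : ℝ) / ((k + c : ℕ) : ℝ)) atTop (nhds 1) := by
  have hreal : Tendsto (fun x : ℝ => 1 - (a : ℝ) / (x + c)) atTop (nhds 1) := by
    have h0 : Tendsto (fun x : ℝ => (a : ℝ) / (x + c)) atTop (nhds 0) :=
      Tendsto.div_atTop tendsto_const_nhds (tendsto_atTop_add_const_right _ _ tendsto_id)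
    simpa using tendsto_const_nhds.sub h0
  have hcomp : Tendsto (fun k : ℕ => 1 - (a : ℝ) / ((k : ℝ) + c)) atTop (nhds 1) :=
    hreal.comp tendsto_natCast_atTop_atTop
  apply hcomp.congr'
  filter_upwards [eventually_ge_atTop a] with k hk
  have hk0 : (0 : ℝ) < (k : ℝ) + c := by positivity
  have hcast : ((k - a + c : ℕ) : ℝ) = (k : ℝ) - a + c := by
    push_cast [Nat.cast_sub hk]; ring
  rw [hcast]
  push_cast
  field_simp
  ring

lemma asc_prod (m s : ℕ) : (m+1).ascFactorial s = ∏ i ∈ Finset.range s, (m + 1 + i) := by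
  induction s with
  | zero => simp
  | succ s ih => rw [Nat.ascFactorial_succ, Finset.prod_range_succ, ih]; ring

lemma ratio_tendsto (a s : ℕ) :
    Tendsto (fun k : ℕ => (((k - a + s).choose s : ℕ) : ℝ) / (((k + s).choose s : ℕ) : ℝ))
      atTop (nhds 1) := by
  have hprod : Tendsto (fun k : ℕ =>
      ∏ i ∈ Finset.range s, (((k - a + (1 + i) : ℕ) : ℝ) / ((k + (1 + i) : ℕ) : ℝ)))
      atTop (nhds (∏ _i ∈ Finset.range s, (1:ℝ))) :=
    tendsto_finset_prod _ (fun i _ => factor_tendsto a (1+i) (by omega))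
  rw [Finset.prod_const_one] at hprod
  apply hprod.congr
  intro k
  have h1 : ∀ m : ℕ, ((m + s).choose s : ℝ) * (Nat.factorial s : ℝ) =
      ((m+1).ascFactorial s : ℝ) := by
    intro m
    rw [Nat.ascFactorial_eq_factorial_mul_choose]
    push_cast; ring
  have h2 : ∀ m : ℕ, ((m+1).ascFactorial s : ℝ) = ∏ i ∈ Finset.range s, ((m + (1+i) : ℕ) : ℝ) := by
    intro m
    rw [asc_prod, Nat.cast_prod]
    exact Finset.prod_congr rfl fun i _ => by norm_cast; ring
  have hfac : (0:ℝ) < (Nat.factorial s : ℝ) := by exact_mod_cast Nat.factorial_pos s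
  rw [Finset.prod_div_distrib, ← h2, ← h2, ← h1, ← h1]
  rw [mul_div_mul_right _ _ (ne_of_gt hfac)]

end SigAux

/-- for a generic tuple, the ratio of the absolute signature of the
level-`m` multiplicity space to its dimension `C(m+n−2, n−2)` tends to `1`. -/
theorem stmt_19 (n : ℕ) (hn : 2 ≤ n) (lam : Fin n → ℝ)
    (hgen : ∀ (i : Fin n) (z : ℕ), lam i ≠ z)
    (hsumZ : ∀ z : ℕ, (∑ i, lam i) ≠ z)
    (d : ℕ → ℤ)
    (hd : ∀ k : ℕ, d k = convSig n lam k -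
      ∑ m ∈ Finset.range k, d m * fsig ((∑ i, lam i) - 2 * m) ((k : ℤ) - m)) :
    Tendsto (fun m : ℕ => (|d m| : ℝ) / ((m + n - 2).choose (n - 2) : ℝ))
      atTop (nhds 1) := by
  set NL : ℕ := nof (∑ i, lam i) with hNL
  set W : ℕ := ∑ i, nof (lam i) with hW
  set H : ℕ → ℤ := fun a => PowerSeries.coeff (R := ℤ) a (∏ i, Gps (lam i)) with hH
  set s : ℕ := n - 2 with hs
  have hdEq : ∀ k : ℕ, NL + 1 ≤ k → d k = convSig n lam k + convSig n lam (k-1) :=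
    fun k hk => dEq n lam hsumZ d hd hk
  have hmass : ∑ a ∈ Finset.range (W+1), (-1:ℤ)^a * H a = (-1)^W := Hmass n lam hgen
  have hvalZ : ∑ a ∈ Finset.range (W+1), H a * (-1:ℤ)^a = (-1)^W := by
    rw [← hmass]; exact Finset.sum_congr rfl fun a _ => mul_comm _ _
  have hval : ∑ a ∈ Finset.range (W+1), ((H a:ℝ) * (-1)^a) * 1 = ((-1:ℝ))^W := by
    simp only [mul_one]
    exact_mod_cast hvalZ
  have hu : Tendsto (fun k : ℕ => ∑ a ∈ Finset.range (W+1),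
      ((H a : ℝ) * (-1)^a) * ((((k - a + s).choose s : ℕ) : ℝ) / (((k + s).choose s : ℕ) : ℝ)))
      atTop (nhds ((-1:ℝ)^W)) := by
    have h := tendsto_finset_sum (Finset.range (W+1))
      (fun a (_ : a ∈ Finset.range (W+1)) => (tendsto_const_nhds (x := (H a : ℝ) * (-1)^a)).mul (ratio_tendsto a s))
    rwa [hval] at h
  have hev : ∀ᶠ k in atTop, ((-1:ℝ))^k * (d k : ℝ) / (((k + s).choose s : ℕ) : ℝ)
      = ∑ a ∈ Finset.range (W+1),
        ((H a : ℝ) * (-1)^a) * ((((k - a + s).choose s : ℕ) : ℝ) / (((k + s).choose s : ℕ) : ℝ)) := by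
    filter_upwards [eventually_ge_atTop (max (NL+1) W)] with k hk
    have hk1 : NL + 1 ≤ k := le_trans (le_max_left _ _) hk
    have hk2 : W ≤ k := le_trans (le_max_right _ _) hk
    have hfZ := dFormula n hn lam hgen d hdEq hk1 hk2
    have hfR : (d k : ℝ) = ∑ a ∈ Finset.range (W+1),
        (H a : ℝ) * ((-1)^(k-a) * (((k - a + s).choose s : ℕ) : ℝ)) := by
      exact_mod_cast hfZ
    rw [hfR, Finset.mul_sum, Finset.sum_div]
    refine Finset.sum_congr rfl fun a ha => ?_
    have hak : a ≤ k := le_trans (by simpa using Nat.lt_succ_iff.mp (Finset.mem_range.mp ha)) hk2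
    have hsignZ : ((-1:ℤ))^(k-a) = (-1)^(k+a) := neg_one_pow_sub hak
    have hsign : ((-1:ℝ))^(k-a) = (-1)^(k+a) := by exact_mod_cast hsignZ
    have hsq : ((-1:ℝ)^k)*((-1:ℝ)^k) = 1 := by
      rw [← pow_add]; exact Even.neg_one_pow ⟨k, rfl⟩
    rw [hsign, mul_div_assoc, mul_div_assoc]
    rw [pow_add]
    ring_nf
    linear_combination ((H a : ℝ) * (-1:ℝ)^a * ((((k - a + s).choose s : ℕ) : ℝ) / (((k + s).choose s : ℕ) : ℝ))) * hsq
  have hmain : Tendsto (fun k : ℕ => ((-1:ℝ))^k * (d k : ℝ) / (((k + s).choose s : ℕ) : ℝ))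
      atTop (nhds ((-1:ℝ)^W)) := hu.congr' (EventuallyEq.symm hev)
  have habs := hmain.abs
  have habs1 : Tendsto (fun k : ℕ => |((-1:ℝ))^k * (d k : ℝ) / (((k + s).choose s : ℕ) : ℝ)|)
      atTop (nhds 1) := by
    convert habs using 2
    rw [abs_pow, abs_neg, abs_one, one_pow]
  apply habs1.congr
  intro m
  have hms : m + n - 2 = m + s := by omega
  rw [hms, abs_div, abs_mul, abs_pow, abs_neg, abs_one, one_pow, one_mul,
    Nat.abs_cast]
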